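/- Fix an integer $N \geq 2$ and let $\theta_j = \frac{2\pi j}{N}$. Define $h(x) = \sum_{j=1}^{N} \frac{1}{[1 + x^2 - 2x\cos(\frac{2j-1}{N}\pi)]^{1/2}} - \sum_{j=1}^{N} \frac{1}{[1 + x^2 - 2x\cos(\frac{2j}{N}\pi)]^{1/2}}$ for $x \in (0,1)$. Then $h(x) < 0$ and $h'(x) < 0$ for all $x \in (0,1)$. -/

import Mathlib

open Real Finset


noncomputable def dd : ℕ → ℝ
  | 0 => 1
  | k+1 => dd k * (2*k+1) / (2*k+2)

lemma dd_pos (k : ℕ) : 0 < dd k := by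
  induction k with
  | zero => norm_num [dd]
  | succ k ih => rw [dd]; positivity

lemma dd_le_one (k : ℕ) : dd k ≤ 1 := by
  induction k with
  | zero => norm_num [dd]
  | succ k ih =>
    rw [dd, div_le_one (by positivity)]
    nlinarith [dd_pos k]

lemma dd_rec (k : ℕ) : 2 * ((k:ℝ)+1) * dd (k+1) = (2*k+1) * dd k := by
  rw [dd]; field_simp

noncomputable def ddS (n : ℕ) : ℝ := ∑ p ∈ Finset.HasAntidiagonal.antidiagonal n, dd p.1 * dd p.2
noncomputable def ddU (n : ℕ) : ℝ := ∑ p ∈ Finset.HasAntidiagonal.antidiagonal n, (p.1:ℝ) * dd p.1 * dd p.2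

lemma ddU_eq (n : ℕ) : 2 * ddU n = n * ddS n := by
  have hsym : ∑ p ∈ Finset.HasAntidiagonal.antidiagonal n, (p.2:ℝ) * dd p.1 * dd p.2 = ddU n := by
    rw [ddU, ← Finset.Nat.sum_antidiagonal_swap (f := fun p => (p.1:ℝ) * dd p.1 * dd p.2)]
    exact Finset.sum_congr rfl fun p hp => by simp [Prod.swap]; ring
  have key : ddU n + ddU n = ∑ p ∈ Finset.HasAntidiagonal.antidiagonal n, ((p.1:ℝ) + p.2) * dd p.1 * dd p.2 := by
    nth_rewrite 1 [ddU]
    rw [← hsym, ← Finset.sum_add_distrib]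
    exact Finset.sum_congr rfl fun p hp => by ring
  rw [two_mul, key, ddS, Finset.mul_sum]
  refine Finset.sum_congr rfl fun p hp => ?_
  have h := Finset.HasAntidiagonal.mem_antidiagonal.mp hp
  have h2 : ((p.1:ℝ) + p.2) = n := by exact_mod_cast congrArg (Nat.cast : ℕ → ℝ) h
  rw [h2]; ring

lemma ddU_succ (k : ℕ) : ddU (k+1) = ddU k + ddS k / 2 := by
  rw [ddU, Finset.Nat.sum_antidiagonal_succ]
  simp only [Nat.cast_zero, zero_mul]
  rw [zero_add]
  have key : ∀ p : ℕ × ℕ, ((p.1+1 : ℕ):ℝ) * dd (p.1+1) * dd p.2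
      = (p.1:ℝ) * dd p.1 * dd p.2 + (dd p.1 * dd p.2) / 2 := by
    intro p
    have h := dd_rec p.1
    push_cast
    linear_combination (dd p.2 / 2) * h
  simp only [key, Finset.sum_add_distrib, ← Finset.sum_div]
  rw [ddU, ddS]

lemma dd_cauchy (k : ℕ) : ddS k = 1 := by
  induction k with
  | zero => simp [ddS, dd]
  | succ k ih =>
    have h1 : 2 * ddU (k+1) = ((k:ℝ)+1) * ddS (k+1) := by
      have := ddU_eq (k+1); push_cast at this; linarith
    have h2 : 2 * ddU k = k * ddS k := ddU_eq k
    have h3 : ((k:ℝ)+1) * ddS (k+1) = ((k:ℝ)+1) * ddS k := by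
      rw [← h1, ddU_succ]; linarith
    have hk1 : ((k:ℝ)+1) ≠ 0 := by positivity
    rw [mul_left_cancel₀ hk1 h3, ih]


noncomputable def FF (z : ℂ) : ℂ := ∑' k, (dd k : ℂ) * z^k

lemma summable_FF {z : ℂ} (hz : ‖z‖ < 1) : Summable (fun k => (dd k:ℂ) * z^k) := by
  refine Summable.of_norm_bounded (summable_geometric_of_lt_one (norm_nonneg z) hz) ?_
  intro k
  rw [norm_mul, norm_pow]
  have h1 : ‖(dd k : ℂ)‖ = dd k := by
    rw [Complex.norm_real, Real.norm_of_nonneg (dd_pos k).le]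
  rw [h1]
  calc dd k * ‖z‖^k ≤ 1 * ‖z‖^k := by
        apply mul_le_mul_of_nonneg_right (dd_le_one k) (by positivity)
    _ = ‖z‖^k := one_mul _

lemma FF_sq {z : ℂ} (hz : ‖z‖ < 1) : FF z * FF z = (1 - z)⁻¹ := by
  have hs : Summable (fun k => ‖(dd k:ℂ) * z^k‖) := (summable_FF hz).norm
  rw [FF, tsum_mul_tsum_eq_tsum_sum_antidiagonal_of_summable_norm hs hs]
  have key : ∀ k : ℕ, ∑ p ∈ Finset.HasAntidiagonal.antidiagonal k, ((dd p.1:ℂ) * z^p.1) * ((dd p.2:ℂ) * z^p.2) = z^k := by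
    intro k
    have : ∀ p ∈ Finset.HasAntidiagonal.antidiagonal k, ((dd p.1:ℂ) * z^p.1) * ((dd p.2:ℂ) * z^p.2)
        = ((dd p.1 * dd p.2 : ℝ) : ℂ) * z^k := by
      intro p hp
      have h := Finset.HasAntidiagonal.mem_antidiagonal.mp hp
      rw [← h]
      push_cast
      ring
    rw [Finset.sum_congr rfl this, ← Finset.sum_mul, ← Complex.ofReal_sum]
    rw [show ∑ p ∈ Finset.HasAntidiagonal.antidiagonal k, dd p.1 * dd p.2 = ddS k from rfl, dd_cauchy]
    simp
  simp_rw [key]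
  exact tsum_geometric_of_norm_lt_one hz

lemma FF_conj (z : ℂ) : (starRingEnd ℂ) (FF z) = FF ((starRingEnd ℂ) z) := by
  rw [FF, FF]
  rw [show (starRingEnd ℂ) (∑' (k:ℕ), (dd k:ℂ) * z^k) = star (∑' (k:ℕ), (dd k:ℂ) * z^k) from rfl,
    tsum_star]
  congr 1
  funext k
  simp [star_pow, Complex.conj_ofReal]

lemma abs_FF_sq {z : ℂ} (hz : ‖z‖ < 1) : ‖FF z‖^2 = ‖1 - z‖⁻¹ := by
  have := congrArg norm (FF_sq hz)
  rwa [norm_mul, norm_inv, ← sq] at this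

lemma angle_eq (x : ℝ) (hx : x ∈ Set.Ioo (0:ℝ) 1) (θ : ℝ) :
    (1 + x^2 - 2*x*Real.cos θ) ^ (-(1:ℝ)/2)
      = ‖FF (↑x * Complex.exp (↑θ * Complex.I))‖^2 := by
  set z : ℂ := ↑x * Complex.exp (↑θ * Complex.I) with hzdef
  have hx0 := hx.1
  have hx1 := hx.2
  have hzn : ‖z‖ < 1 := by
    rw [hzdef, norm_mul, Complex.norm_real, Real.norm_of_nonneg hx0.le,
      Complex.norm_exp_ofReal_mul_I, mul_one]
    exact hx1
  have hnsq : Complex.normSq (1 - z) = 1 + x^2 - 2*x*Real.cos θ := by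
    rw [hzdef]
    rw [Complex.normSq_apply]
    simp [Complex.exp_ofReal_mul_I_re, Complex.exp_ofReal_mul_I_im]
    nlinarith [Real.sin_sq_add_cos_sq θ]
  have hu : (0:ℝ) < 1 + x^2 - 2*x*Real.cos θ := by
    nlinarith [Real.cos_le_one θ, Real.neg_one_le_cos θ]
  rw [abs_FF_sq hzn]
  rw [Complex.norm_def, hnsq]
  rw [show (-(1:ℝ)/2) = -(1/2) by norm_num, Real.rpow_neg hu.le, Real.sqrt_eq_rpow]


noncomputable def BB (M r : ℕ) (x : ℝ) : ℝ := ∑' q : ℕ, dd (M*q + r) * x^(M*q + r)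
noncomputable def DB (M r : ℕ) (x : ℝ) : ℝ :=
  ∑' q : ℕ, dd (M*q + r) * (((M*q + r : ℕ) : ℝ) * x^(M*q + r - 1))

lemma summable_pow_aux {b : ℝ} (hb0 : 0 ≤ b) (hb : b < 1) :
    Summable (fun m : ℕ => (m:ℝ) * b^(m-1)) := by
  rw [← summable_nat_add_iff 1]
  have hb' : ‖b‖ < 1 := by rwa [Real.norm_of_nonneg hb0]
  have h1 : Summable (fun m : ℕ => (m:ℝ) * b^m) := by
    simpa using summable_pow_mul_geometric_of_norm_lt_one 1 hb'
  have h2 : Summable (fun m : ℕ => b^m) := summable_geometric_of_lt_one hb0 hb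
  refine (h1.add h2).congr fun m => ?_
  push_cast
  ring

lemma gM_inj (M r : ℕ) (hM : 0 < M) : Function.Injective (fun q => M*q + r) := by
  intro a b hab
  simp only [add_left_inj] at hab
  exact Nat.eq_of_mul_eq_mul_left hM hab

lemma summable_real_dd {x : ℝ} (hx0 : 0 ≤ x) (hx : x < 1) :
    Summable (fun m : ℕ => dd m * x^m) := by
  refine Summable.of_nonneg_of_le (fun m => ?_)
    (fun m => ?_) (summable_geometric_of_lt_one hx0 hx)
  · have := dd_pos m; positivity
  calc dd m * x^m ≤ 1 * x^m := mul_le_mul_of_nonneg_right (dd_le_one m) (by positivity)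
    _ = x^m := one_mul _

lemma summable_BB (M r : ℕ) (hM : 0 < M) {x : ℝ} (hx0 : 0 ≤ x) (hx : x < 1) :
    Summable (fun q : ℕ => dd (M*q + r) * x^(M*q + r)) :=
  (summable_real_dd hx0 hx).comp_injective (gM_inj M r hM)

lemma summable_DB (M r : ℕ) (hM : 0 < M) {x : ℝ} (hx0 : 0 ≤ x) (hx : x < 1) :
    Summable (fun q : ℕ => dd (M*q + r) * (((M*q + r : ℕ):ℝ) * x^(M*q + r - 1))) := by
  have haux : Summable ((fun m : ℕ => (m:ℝ) * x^(m-1)) ∘ (fun q => M*q + r)) :=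
    (summable_pow_aux hx0 hx).comp_injective (gM_inj M r hM)
  refine Summable.of_nonneg_of_le (fun q => ?_) (fun q => ?_) haux
  · have := dd_pos (M*q+r); positivity
  simp only [Function.comp]
  have hc : (0:ℝ) ≤ ((M*q+r:ℕ):ℝ) * x^(M*q+r-1) := by positivity
  calc dd (M*q+r) * (((M*q+r:ℕ):ℝ) * x^(M*q+r-1))
      ≤ 1 * (((M*q+r:ℕ):ℝ) * x^(M*q+r-1)) :=
        mul_le_mul_of_nonneg_right (dd_le_one _) hc
    _ = ((M*q+r : ℕ):ℝ) * x^(M*q+r-1) := one_mul _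

lemma BB_pos (M r : ℕ) (hM : 0 < M) {x : ℝ} (hx : x ∈ Set.Ioo (0:ℝ) 1) :
    0 < BB M r x := by
  refine Summable.tsum_pos (summable_BB M r hM hx.1.le hx.2) (fun q => ?_) 0 ?_
  · have := dd_pos (M*q+r); have := hx.1; positivity
  · have := dd_pos (M*0+r); have := hx.1; positivity

lemma BB_nonneg (M r : ℕ) (hM : 0 < M) {x : ℝ} (hx : x ∈ Set.Ioo (0:ℝ) 1) :
    0 ≤ BB M r x := (BB_pos M r hM hx).le

lemma DB_nonneg (M r : ℕ) {x : ℝ} (hx : x ∈ Set.Ioo (0:ℝ) 1) : 0 ≤ DB M r x := by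
  refine tsum_nonneg fun q => ?_
  have := dd_pos (M*q+r); have := hx.1; positivity

lemma DB_pos (M r : ℕ) (hM : 0 < M) (hr : 1 ≤ r) {x : ℝ} (hx : x ∈ Set.Ioo (0:ℝ) 1) :
    0 < DB M r x := by
  refine Summable.tsum_pos (summable_DB M r hM hx.1.le hx.2) (fun q => ?_) 0 ?_
  · have := dd_pos (M*q+r); have := hx.1; positivity
  · have h1 := dd_pos (M*0+r)
    have h2 := hx.1
    have h3 : 0 < (M*0+r : ℕ) := by omega
    have h4 : (0:ℝ) < (M*0+r : ℕ) := by exact_mod_cast h3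
    positivity

lemma BB_hasDeriv (M r : ℕ) (hM : 0 < M) {x : ℝ} (hx : x ∈ Set.Ioo (0:ℝ) 1) :
    HasDerivAt (BB M r) (DB M r x) x := by
  obtain ⟨hx0, hx1⟩ := hx
  set b : ℝ := (1+x)/2 with hb
  have hb0 : 0 < b := by rw [hb]; linarith
  have hbx : x < b := by rw [hb]; linarith
  have hb1 : b < 1 := by rw [hb]; linarith
  have hu : Summable (fun q : ℕ => ((M*q + r : ℕ):ℝ) * b^(M*q + r - 1)) :=
    (summable_pow_aux hb0.le hb1).comp_injective (gM_inj M r hM)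
  refine hasDerivAt_tsum_of_isPreconnected hu (isOpen_Ioo (a := -b) (b := b))
      (convex_Ioo (-b) b).isPreconnected
      (g := fun q y => dd (M*q + r) * y^(M*q + r))
      (g' := fun q y => dd (M*q + r) * (((M*q + r : ℕ):ℝ) * y^(M*q + r - 1)))
      (fun q y _ => (hasDerivAt_pow (M*q+r) y).const_mul (dd (M*q+r)))
      (fun q y hy => ?_) (y₀ := x) ⟨by linarith, hbx⟩
      (summable_BB M r hM hx0.le hx1) ⟨by linarith, hbx⟩
  · -- norm bound
    have hyb : |y| ≤ b := by
      rw [abs_le]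
      exact ⟨hy.1.le, hy.2.le⟩
    show ‖dd (M*q+r) * (((M*q+r:ℕ):ℝ) * y^(M*q+r-1))‖ ≤ ((M*q+r:ℕ):ℝ) * b^(M*q+r-1)
    have h1 : ‖dd (M*q+r) * (((M*q+r:ℕ):ℝ) * y^(M*q+r-1))‖
        = dd (M*q+r) * (((M*q+r:ℕ):ℝ) * |y|^(M*q+r-1)) := by
      rw [Real.norm_eq_abs, abs_mul, abs_mul, abs_pow]
      rw [abs_of_nonneg (dd_pos _).le, Nat.abs_cast]
    rw [h1]
    have hpow : |y|^(M*q+r-1) ≤ b^(M*q+r-1) := pow_le_pow_left₀ (abs_nonneg y) hyb _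
    have hn : (0:ℝ) ≤ ((M*q+r:ℕ):ℝ) := Nat.cast_nonneg _
    calc dd (M*q+r) * (((M*q+r:ℕ):ℝ) * |y|^(M*q+r-1))
        ≤ 1 * (((M*q+r:ℕ):ℝ) * b^(M*q+r-1)) := by
          apply mul_le_mul (dd_le_one _)
            (mul_le_mul_of_nonneg_left hpow hn) (by positivity) (by norm_num)
      _ = ((M*q+r : ℕ):ℝ) * b^(M*q+r-1) := one_mul _


lemma FF_decomp (M : ℕ) (hM : 0 < M) (w : ℂ) (hw : w^M = 1) {x : ℝ}
    (hx0 : 0 ≤ x) (hx : x < 1) :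
    FF (↑x * w) = ∑ r ∈ Finset.range M, w^r * (BB M r x : ℂ) := by
  haveI : NeZero M := ⟨hM.ne'⟩
  have hwabs : ‖w‖ = 1 := by
    have h1 : ‖w‖^M = 1 := by rw [← norm_pow, hw, norm_one]
    rcases pow_eq_one_iff_cases.mp h1 with h | h | h
    · omega
    · exact h
    · exfalso; nlinarith [norm_nonneg w, h.1]
  have hz : ‖(↑x * w : ℂ)‖ < 1 := by
    rw [norm_mul, Complex.norm_real, hwabs, mul_one,
      Real.norm_of_nonneg hx0]
    exact hx
  have hsum : Summable (fun m : ℕ => (dd m : ℂ) * (↑x * w)^m) := summable_FF hz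
  set f : ℕ → ℂ := fun m => (dd m : ℂ) * (↑x * w)^m with hf
  set e : Fin M × ℕ ≃ ℕ := (Equiv.prodComm (Fin M) ℕ).trans (Nat.divModEquiv M).symm with he
  have he' : ∀ (r : Fin M) (q : ℕ), e (r, q) = q * M + (r:ℕ) := fun r q => rfl
  have step1 : FF (↑x * w) = ∑' p : Fin M × ℕ, f (e p) := (Equiv.tsum_eq e f).symm
  have hsum2 : Summable (fun p : Fin M × ℕ => f (e p)) := hsum.comp_injective e.injective
  have step2 : ∑' p : Fin M × ℕ, f (e p) = ∑' (r : Fin M), ∑' (q : ℕ), f (q * M + (r:ℕ)) := by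
    rw [Summable.tsum_prod' hsum2 (fun r => (hsum2.prod_factor r))]
    rfl
  have step3 : ∀ r : Fin M, ∑' (q : ℕ), f (q * M + (r:ℕ)) = w^(r:ℕ) * (BB M (r:ℕ) x : ℂ) := by
    intro r
    have hterm : ∀ q : ℕ, f (q * M + (r:ℕ))
        = w^(r:ℕ) * ((dd (M*q + (r:ℕ)) * x^(M*q + (r:ℕ)) : ℝ) : ℂ) := by
      intro q
      rw [hf]
      simp only
      rw [show q * M + (r:ℕ) = M * q + (r:ℕ) by ring, mul_pow]
      have hwpow : w ^ (M*q + (r:ℕ)) = w ^ (r:ℕ) := by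
        rw [pow_add, pow_mul, hw, one_pow, one_mul]
      rw [hwpow]
      push_cast
      ring
    simp_rw [hterm]
    rw [tsum_mul_left, BB, Complex.ofReal_tsum]
  rw [step1, step2]
  rw [tsum_fintype]
  rw [← Fin.sum_univ_eq_sum_range (fun r => w^r * (BB M r x : ℂ)) M]
  exact Finset.sum_congr rfl fun r _ => step3 r

lemma geom_diff (N : ℕ) (hN : 1 ≤ N) (η : ℂ) (hη : η^(2*N) = 1) :
    ∑ j ∈ Finset.Icc 1 N, η^(2*j-1) - ∑ j ∈ Finset.Icc 1 N, η^(2*j)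
      = if η = -1 then (-(2*(N:ℂ))) else 0 := by
  have hη0 : η ≠ 0 := by
    intro h
    rw [h] at hη
    rw [zero_pow (by omega : 2*N ≠ 0)] at hη
    exact zero_ne_one hη
  by_cases h1 : η = 1
  · subst h1
    norm_num
  by_cases h2 : η = -1
  · subst h2
    rw [if_pos rfl]
    have hodd : ∀ j ∈ Finset.Icc 1 N, ((-1:ℂ))^(2*j-1) = -1 := by
      intro j hj
      have hj1 : 1 ≤ j := (Finset.mem_Icc.mp hj).1
      have : Odd (2*j-1) := by
        refine ⟨j-1, by omega⟩
      exact Odd.neg_one_pow this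
    have heven : ∀ j ∈ Finset.Icc 1 N, ((-1:ℂ))^(2*j) = 1 := by
      intro j hj
      exact Even.neg_one_pow ⟨j, by ring⟩
    rw [Finset.sum_congr rfl hodd, Finset.sum_congr rfl heven]
    rw [Finset.sum_const, Finset.sum_const, Nat.card_Icc]
    simp
    push_cast
    ring
  · rw [if_neg h2]
    have hsq : η^2 ≠ 1 := by
      intro h
      have : (η - 1) * (η + 1) = 0 := by ring_nf; linear_combination h
      rcases mul_eq_zero.mp this with h | h
      · exact h1 (by linear_combination h)
      · exact h2 (by linear_combination h)
    have hP : ∑ j ∈ Finset.Icc 1 N, (η^2)^j = 0 := by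
      have hgeom := geom_sum_eq hsq (N+1)
      have hpow : (η^2)^(N+1) = η^2 := by
        rw [← pow_mul, show 2*(N+1) = 2*N + 2 by ring, pow_add, hη, one_mul]
      have hrange : ∑ j ∈ Finset.range (N+1), (η^2)^j
          = 1 + ∑ j ∈ Finset.Icc 1 N, (η^2)^j := by
        rw [Finset.sum_range_succ',
          show Finset.Icc 1 N = Finset.Ico 1 (N+1) by rw [Finset.Ico_add_one_right_eq_Icc],
          Finset.sum_Ico_eq_sum_range]
        simp [Nat.add_sub_cancel, add_comm 1]
        exact add_comm _ 1
      have hone : ∑ j ∈ Finset.range (N+1), (η^2)^j = 1 := by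
        rw [hgeom, hpow]
        exact div_self (sub_ne_zero.mpr hsq)
      rw [hrange] at hone
      linear_combination hone
    have hE : ∑ j ∈ Finset.Icc 1 N, η^(2*j) = 0 := by
      simp_rw [pow_mul]
      exact hP
    have hO : ∑ j ∈ Finset.Icc 1 N, η^(2*j-1) = 0 := by
      have : ∀ j ∈ Finset.Icc 1 N, η^(2*j-1) = η⁻¹ * (η^2)^j := by
        intro j hj
        have hj1 : 1 ≤ j := (Finset.mem_Icc.mp hj).1
        rw [← pow_mul]
        field_simp
        rw [← pow_succ]
        congr 1
        omega
      rw [Finset.sum_congr rfl this, ← Finset.mul_sum, hP, mul_zero]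
    rw [hE, hO]
    ring


noncomputable def zz (N : ℕ) : ℂ := Complex.exp (↑(π/N) * Complex.I)

noncomputable def cc (N r s : ℕ) : ℝ :=
  if (zz N)^r * ((zz N)^s)⁻¹ = -1 then -(2*(N:ℝ)) else 0

noncomputable def HH (N : ℕ) (y : ℝ) : ℝ :=
  ∑ r ∈ Finset.range (2*N), ∑ s ∈ Finset.range (2*N),
    cc N r s * (BB (2*N) r y * BB (2*N) s y)

noncomputable def DH (N : ℕ) (y : ℝ) : ℝ :=
  ∑ r ∈ Finset.range (2*N), ∑ s ∈ Finset.range (2*N),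
    cc N r s * (DB (2*N) r y * BB (2*N) s y + BB (2*N) r y * DB (2*N) s y)

lemma zz_ne_zero (N : ℕ) : zz N ≠ 0 := Complex.exp_ne_zero _

lemma zz_pow_two_n (N : ℕ) (hN : 1 ≤ N) : (zz N)^(2*N) = 1 := by
  rw [zz, ← Complex.exp_nat_mul]
  have hNne : ((N:ℂ)) ≠ 0 := Nat.cast_ne_zero.mpr (by omega)
  have h : ((2*N : ℕ) : ℂ) * (↑(π/(N:ℝ)) * Complex.I) = 2*π*Complex.I := by
    push_cast
    field_simp
  rw [h, Complex.exp_two_pi_mul_I]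

lemma zz_pow_n (N : ℕ) (hN : 1 ≤ N) : (zz N)^N = -1 := by
  rw [zz, ← Complex.exp_nat_mul]
  have hNne : ((N:ℂ)) ≠ 0 := Nat.cast_ne_zero.mpr (by omega)
  have h : ((N : ℕ) : ℂ) * (↑(π/(N:ℝ)) * Complex.I) = π*Complex.I := by
    push_cast
    field_simp
  rw [h, Complex.exp_pi_mul_I]

lemma cc_nonpos (N r s : ℕ) : cc N r s ≤ 0 := by
  rw [cc]
  split_ifs
  · have : (0:ℝ) ≤ 2*(N:ℝ) := by positivity
    linarith
  · exact le_refl 0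

lemma cc_diag (N : ℕ) (hN : 1 ≤ N) : cc N N 0 = -(2*(N:ℝ)) := by
  rw [cc, if_pos]
  rw [pow_zero, inv_one, mul_one, zz_pow_n N hN]

lemma eta_pow (N : ℕ) (hN : 1 ≤ N) (r s : ℕ) :
    ((zz N)^r * ((zz N)^s)⁻¹)^(2*N) = 1 := by
  have h2N := zz_pow_two_n N hN
  rw [mul_pow, inv_pow, pow_right_comm, h2N, one_pow, pow_right_comm, h2N, one_pow, inv_one,
    mul_one]

lemma term_eq (N : ℕ) (hN : 2 ≤ N) {x : ℝ} (hx : x ∈ Set.Ioo (0:ℝ) 1) (k : ℕ) (hk : k ≤ 2*N) :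
    (((1 + x^2 - 2*x*Real.cos ((k:ℝ)*π/N)) ^ (-(1:ℝ)/2) : ℝ) : ℂ)
      = ∑ r ∈ Finset.range (2*N), ∑ s ∈ Finset.range (2*N),
          ((zz N)^r * ((zz N)^s)⁻¹)^k * (BB (2*N) r x : ℂ) * (BB (2*N) s x : ℂ) := by
  have hN1 : 1 ≤ N := by omega
  have hM : 0 < 2*N := by omega
  have hζ2N := zz_pow_two_n N hN1
  have hζ0 := zz_ne_zero N
  have hexp : Complex.exp (↑((k:ℝ)*π/N) * Complex.I) = (zz N)^k := by
    rw [zz, ← Complex.exp_nat_mul]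
    congr 1
    push_cast
    ring
  have hwk : ((zz N)^k)^(2*N) = 1 := by
    rw [pow_right_comm, hζ2N, one_pow]
  have hwk' : ((zz N)^(2*N-k))^(2*N) = 1 := by
    rw [pow_right_comm, hζ2N, one_pow]
  have hinv : ((zz N)^k)⁻¹ = (zz N)^(2*N-k) := by
    apply inv_eq_of_mul_eq_one_left
    rw [← pow_add, show 2*N-k+k = 2*N by omega]
    exact hζ2N
  set z : ℂ := ↑x * (zz N)^k with hz
  have habs : (1 + x^2 - 2*x*Real.cos ((k:ℝ)*π/N)) ^ (-(1:ℝ)/2)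
      = ‖FF z‖^2 := by
    rw [angle_eq x hx ((k:ℝ)*π/N), hexp]
  have hconj : (starRingEnd ℂ) z = ↑x * (zz N)^(2*N-k) := by
    rw [hz, map_mul, Complex.conj_ofReal, ← hexp, ← Complex.exp_conj]
    congr 1
    have hc : (starRingEnd ℂ) (↑((k:ℝ)*π/N) * Complex.I) = -(↑((k:ℝ)*π/N) * Complex.I) := by
      rw [map_mul, Complex.conj_ofReal, Complex.conj_I]
      ring
    rw [hc, Complex.exp_neg, hexp]
    exact hinv
  have hsq : ((‖FF z‖^2 : ℝ) : ℂ) = FF z * FF ((x:ℂ) * (zz N)^(2*N-k)) := by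
    rw [← hconj, ← FF_conj, Complex.mul_conj, Complex.normSq_eq_norm_sq]
  rw [habs, hsq]
  rw [FF_decomp (2*N) hM ((zz N)^k) hwk hx.1.le hx.2,
    FF_decomp (2*N) hM ((zz N)^(2*N-k)) hwk' hx.1.le hx.2]
  rw [Finset.sum_mul_sum]
  refine Finset.sum_congr rfl fun r hr => Finset.sum_congr rfl fun s hs => ?_
  have hs0 : (zz N)^s ≠ 0 := pow_ne_zero _ hζ0
  have hps : ((zz N)^(2*N-k))^s = (((zz N)^s)⁻¹)^k := by
    rw [pow_right_comm, pow_sub₀ _ hs0 hk, pow_right_comm, hζ2N, one_pow, one_mul, ← inv_pow]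
  rw [hps, pow_right_comm (zz N) k r, mul_pow]
  ring

lemma sum_neg_aux {α : Type*} (s : Finset α) (f : α → ℝ) (h : ∀ i ∈ s, f i ≤ 0)
    (i : α) (hi : i ∈ s) (hfi : f i < 0) : ∑ j ∈ s, f j < 0 := by
  have := Finset.sum_lt_sum (g := fun _ => (0:ℝ)) h ⟨i, hi, hfi⟩
  simpa using this

lemma main_id (N : ℕ) (hN : 2 ≤ N) {x : ℝ} (hx : x ∈ Set.Ioo (0:ℝ) 1) :
    ∑ j ∈ Finset.Icc 1 N, (1 + x ^ 2 - 2 * x * Real.cos ((2 * (j:ℝ) - 1) * π / N)) ^ (-(1:ℝ)/2)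
      - ∑ j ∈ Finset.Icc 1 N, (1 + x ^ 2 - 2 * x * Real.cos ((2 * (j:ℝ)) * π / N)) ^ (-(1:ℝ)/2)
      = HH N x := by
  have hN1 : 1 ≤ N := by omega
  apply Complex.ofReal_inj.mp
  rw [Complex.ofReal_sub, Complex.ofReal_sum, Complex.ofReal_sum]
  have hodd : ∀ j ∈ Finset.Icc 1 N,
      (((1 + x ^ 2 - 2 * x * Real.cos ((2 * (j:ℝ) - 1) * π / N)) ^ (-(1:ℝ)/2) : ℝ) : ℂ)
      = ∑ r ∈ Finset.range (2*N), ∑ s ∈ Finset.range (2*N),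
          ((zz N)^r * ((zz N)^s)⁻¹)^(2*j-1) * (BB (2*N) r x : ℂ) * (BB (2*N) s x : ℂ) := by
    intro j hj
    obtain ⟨hj1, hjN⟩ := Finset.mem_Icc.mp hj
    have hcast : (2 * (j:ℝ) - 1) = (((2*j-1 : ℕ)):ℝ) := by
      push_cast [Nat.cast_sub (by omega : 1 ≤ 2*j)]
      ring
    rw [hcast]
    exact term_eq N hN hx (2*j-1) (by omega)
  have heven : ∀ j ∈ Finset.Icc 1 N,
      (((1 + x ^ 2 - 2 * x * Real.cos ((2 * (j:ℝ)) * π / N)) ^ (-(1:ℝ)/2) : ℝ) : ℂ)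
      = ∑ r ∈ Finset.range (2*N), ∑ s ∈ Finset.range (2*N),
          ((zz N)^r * ((zz N)^s)⁻¹)^(2*j) * (BB (2*N) r x : ℂ) * (BB (2*N) s x : ℂ) := by
    intro j hj
    obtain ⟨hj1, hjN⟩ := Finset.mem_Icc.mp hj
    have hcast : (2 * (j:ℝ)) = (((2*j : ℕ)):ℝ) := by push_cast; ring
    rw [hcast]
    exact term_eq N hN hx (2*j) (by omega)
  rw [Finset.sum_congr rfl hodd, Finset.sum_congr rfl heven]
  rw [Finset.sum_comm (s := Finset.Icc 1 N) (t := Finset.range (2*N))]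
  rw [Finset.sum_comm (s := Finset.Icc 1 N) (t := Finset.range (2*N))]
  rw [← Finset.sum_sub_distrib]
  have hRHS : ((HH N x : ℝ) : ℂ) = ∑ r ∈ Finset.range (2*N), ∑ s ∈ Finset.range (2*N),
      ((cc N r s : ℝ) : ℂ) * (BB (2*N) r x : ℂ) * (BB (2*N) s x : ℂ) := by
    rw [HH, Complex.ofReal_sum]
    refine Finset.sum_congr rfl fun r _ => ?_
    rw [Complex.ofReal_sum]
    refine Finset.sum_congr rfl fun s _ => ?_
    push_cast
    ring
  rw [hRHS]
  refine Finset.sum_congr rfl fun r hr => ?_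
  rw [Finset.sum_comm (s := Finset.Icc 1 N) (t := Finset.range (2*N))]
  rw [Finset.sum_comm (s := Finset.Icc 1 N) (t := Finset.range (2*N))]
  rw [← Finset.sum_sub_distrib]
  refine Finset.sum_congr rfl fun s hs => ?_
  rw [← Finset.sum_mul, ← Finset.sum_mul, ← Finset.sum_mul, ← Finset.sum_mul,
    ← sub_mul, ← sub_mul]
  rw [geom_diff N hN1 _ (eta_pow N hN1 r s)]
  have hccc : ((cc N r s : ℝ) : ℂ)
      = if (zz N)^r * ((zz N)^s)⁻¹ = -1 then (-(2*(N:ℂ))) else 0 := by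
    rw [cc]
    split_ifs with hcase
    · push_cast
      ring
    · simp
  rw [hccc]

theorem stmt13 (N : ℕ) (hN : 2 ≤ N)
    (h : ℝ → ℝ)
    (hdef : ∀ x : ℝ, h x =
      ∑ j ∈ Finset.Icc 1 N, (1 + x ^ 2 - 2 * x * Real.cos ((2 * j - 1) * π / N)) ^ (-(1:ℝ)/2)
      - ∑ j ∈ Finset.Icc 1 N, (1 + x ^ 2 - 2 * x * Real.cos ((2 * j) * π / N)) ^ (-(1:ℝ)/2))
    (x : ℝ) (hx : x ∈ Set.Ioo (0:ℝ) 1) :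
    h x < 0 ∧ deriv h x < 0 := by
  have hN1 : 1 ≤ N := by omega
  have hM : 0 < 2*N := by omega
  have hNmem : N ∈ Finset.range (2*N) := Finset.mem_range.mpr (by omega)
  have h0mem : (0:ℕ) ∈ Finset.range (2*N) := Finset.mem_range.mpr (by omega)
  have hfun : ∀ y ∈ Set.Ioo (0:ℝ) 1, h y = HH N y := by
    intro y hy
    rw [hdef y]
    exact main_id N hN hy
  constructor
  · rw [hfun x hx]
    rw [HH]
    refine sum_neg_aux _ _ (fun r hr => ?_) N hNmem ?_
    · refine Finset.sum_nonpos fun s hs => ?_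
      have hP : (0:ℝ) ≤ BB (2*N) r x * BB (2*N) s x :=
        mul_nonneg (BB_pos (2*N) r hM hx).le (BB_pos (2*N) s hM hx).le
      calc cc N r s * (BB (2*N) r x * BB (2*N) s x)
          ≤ 0 * (BB (2*N) r x * BB (2*N) s x) :=
            mul_le_mul_of_nonneg_right (cc_nonpos N r s) hP
        _ = 0 := zero_mul _
    · refine sum_neg_aux _ _ (fun s hs => ?_) 0 h0mem ?_
      · have hP : (0:ℝ) ≤ BB (2*N) N x * BB (2*N) s x :=
          mul_nonneg (BB_pos (2*N) N hM hx).le (BB_pos (2*N) s hM hx).le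
        calc cc N N s * (BB (2*N) N x * BB (2*N) s x)
            ≤ 0 * (BB (2*N) N x * BB (2*N) s x) :=
              mul_le_mul_of_nonneg_right (cc_nonpos N N s) hP
          _ = 0 := zero_mul _
      · rw [cc_diag N hN1]
        have h1 := BB_pos (2*N) N hM hx
        have h2 := BB_pos (2*N) 0 hM hx
        have h3 : (0:ℝ) < 2*(N:ℝ) := by positivity
        nlinarith [mul_pos h3 (mul_pos h1 h2)]
  · have hDH : HasDerivAt (HH N) (DH N x) x := by
      unfold HH DH
      refine HasDerivAt.fun_sum fun r hr => ?_
      refine HasDerivAt.fun_sum fun s hs => ?_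
      exact ((BB_hasDeriv (2*N) r hM hx).mul (BB_hasDeriv (2*N) s hM hx)).const_mul (cc N r s)
    have hde : deriv h x = DH N x := by
      have heq : h =ᶠ[nhds x] HH N :=
        Filter.eventuallyEq_of_mem (isOpen_Ioo.mem_nhds hx) hfun
      rw [heq.deriv_eq]
      exact hDH.deriv
    rw [hde, DH]
    refine sum_neg_aux _ _ (fun r hr => ?_) N hNmem ?_
    · refine Finset.sum_nonpos fun s hs => ?_
      have hP : (0:ℝ) ≤ DB (2*N) r x * BB (2*N) s x + BB (2*N) r x * DB (2*N) s x := by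
        have := DB_nonneg (2*N) r (x := x) hx
        have := DB_nonneg (2*N) s (x := x) hx
        have := (BB_pos (2*N) r hM hx).le
        have := (BB_pos (2*N) s hM hx).le
        positivity
      calc cc N r s * (DB (2*N) r x * BB (2*N) s x + BB (2*N) r x * DB (2*N) s x)
          ≤ 0 * (DB (2*N) r x * BB (2*N) s x + BB (2*N) r x * DB (2*N) s x) :=
            mul_le_mul_of_nonneg_right (cc_nonpos N r s) hP
        _ = 0 := zero_mul _
    · refine sum_neg_aux _ _ (fun s hs => ?_) 0 h0mem ?_
      · have hP : (0:ℝ) ≤ DB (2*N) N x * BB (2*N) s x + BB (2*N) N x * DB (2*N) s x := by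
          have := DB_nonneg (2*N) N (x := x) hx
          have := DB_nonneg (2*N) s (x := x) hx
          have := (BB_pos (2*N) N hM hx).le
          have := (BB_pos (2*N) s hM hx).le
          positivity
        calc cc N N s * (DB (2*N) N x * BB (2*N) s x + BB (2*N) N x * DB (2*N) s x)
            ≤ 0 * (DB (2*N) N x * BB (2*N) s x + BB (2*N) N x * DB (2*N) s x) :=
              mul_le_mul_of_nonneg_right (cc_nonpos N N s) hP
          _ = 0 := zero_mul _
      · rw [cc_diag N hN1]
        have h1 := DB_pos (2*N) N hM hN1 hx
        have h2 := BB_pos (2*N) 0 hM hx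
        have h3 := BB_pos (2*N) N hM hx
        have h4 := DB_nonneg (2*N) 0 (x := x) hx
        have h5 : (0:ℝ) < 2*(N:ℝ) := by positivity
        have hb : 0 < DB (2*N) N x * BB (2*N) 0 x + BB (2*N) N x * DB (2*N) 0 x :=
          add_pos_of_pos_of_nonneg (mul_pos h1 h2) (mul_nonneg h3.le h4)
        nlinarith [mul_pos h5 hb]
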